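/- Let (Ω, 𝒜, P) be a probability space, let M be a sub-σ-algebra of 𝒜, let X be an integrable ℝ^v-valued random variable and let X̃ be an ℝ^v-valued random variable that has the same distribution as X and is independent of M. Then for every bounded M-measurable real random variable W and every bounded Lipschitz function k : ℝ^v → ℝ one has |Cov(W, k(X))| ≤ ‖W‖_∞ · Lip(k) · E‖X − X̃‖_{l1}, where ‖x‖_{l1} = Σ_{i=1}^v |x_i| and Lip(k) denotes the Lipschitz constant of k with respect to ‖·‖_{l1}. -/

import Mathlib

open MeasureTheory ProbabilityTheory

/-- Covariance inequality for τ-weakly dependent random variables (coupling form):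
if `Xt` is a copy of `X` independent of the sub-σ-algebra `m`, then for every bounded
`m`-measurable `W` and every bounded Lipschitz function `k` (w.r.t. the `l¹`-norm),
`|Cov(W, k ∘ X)| ≤ ‖W‖_∞ · Lip(k) · E‖X − Xt‖_{l¹}`. -/
theorem covariance_coupling_bound
    {Ω : Type*} {m mΩ : MeasurableSpace Ω} (hm : m ≤ mΩ)
    (P : Measure Ω) [IsProbabilityMeasure P]
    (v : ℕ) (X Xt : Ω → (Fin v → ℝ))
    (hX : Measurable X) (hXt : Measurable Xt)
    (hXint : Integrable (fun ω => ∑ i, |X ω i|) P)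
    (hXtint : Integrable (fun ω => ∑ i, |Xt ω i|) P)
    (hdist : Measure.map Xt P = Measure.map X P)
    (hindep : Indep (MeasurableSpace.comap Xt inferInstance) m P)
    (W : Ω → ℝ) (hWm : Measurable[m] W)
    (CW : ℝ) (hCW : ∀ ω, |W ω| ≤ CW)
    (k : (Fin v → ℝ) → ℝ) (hkmeas : Measurable k)
    (Ck : ℝ) (hCk : ∀ x, |k x| ≤ Ck)
    (Lk : ℝ) (hLk : 0 ≤ Lk)
    (hkLip : ∀ x y, |k x - k y| ≤ Lk * ∑ i, |x i - y i|) :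
    |(∫ ω, W ω * k (X ω) ∂P) - (∫ ω, W ω ∂P) * ∫ ω, k (X ω) ∂P|
      ≤ CW * Lk * ∫ ω, ∑ i, |X ω i - Xt ω i| ∂P := by
  have hWmeas : Measurable W := hWm.mono hm le_rfl
  have hne : Nonempty Ω := MeasureTheory.Measure.nonempty_of_neZero P
  have hCW0 : 0 ≤ CW := le_trans (abs_nonneg _) (hCW (Classical.choice hne))
  -- integrabilities
  have hWint : Integrable W P :=
    (integrable_const CW).mono' hWmeas.aestronglyMeasurable
      (Filter.Eventually.of_forall fun ω => by simpa using hCW ω)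
  have hkXint : Integrable (fun ω => k (X ω)) P :=
    (integrable_const Ck).mono' (hkmeas.comp hX).aestronglyMeasurable
      (Filter.Eventually.of_forall fun ω => by simpa using hCk (X ω))
  have hkXtint : Integrable (fun ω => k (Xt ω)) P :=
    (integrable_const Ck).mono' (hkmeas.comp hXt).aestronglyMeasurable
      (Filter.Eventually.of_forall fun ω => by simpa using hCk (Xt ω))
  have hWkX : Integrable (fun ω => W ω * k (X ω)) P :=
    (integrable_const (CW * Ck)).mono'
      (hWmeas.mul (hkmeas.comp hX)).aestronglyMeasurable
      (Filter.Eventually.of_forall fun ω => by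
        simp only [Real.norm_eq_abs, abs_mul]
        exact mul_le_mul (hCW ω) (hCk (X ω)) (abs_nonneg _)
          hCW0)
  have hWkXt : Integrable (fun ω => W ω * k (Xt ω)) P :=
    (integrable_const (CW * Ck)).mono'
      (hWmeas.mul (hkmeas.comp hXt)).aestronglyMeasurable
      (Filter.Eventually.of_forall fun ω => by
        simp only [Real.norm_eq_abs, abs_mul]
        exact mul_le_mul (hCW ω) (hCk (Xt ω)) (abs_nonneg _) hCW0)
  -- independence of k ∘ Xt and W
  have hIF : IndepFun Xt W P :=
    indep_of_indep_of_le_right hindep hWm.comap_le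
  have hIF2 : IndepFun (fun ω => k (Xt ω)) W P := hIF.comp hkmeas measurable_id
  have hmul : ∫ ω, W ω * k (Xt ω) ∂P = (∫ ω, W ω ∂P) * ∫ ω, k (Xt ω) ∂P := by
    have := hIF2.integral_fun_mul_eq_mul_integral hkXtint.1 hWint.1
    calc ∫ ω, W ω * k (Xt ω) ∂P = ∫ ω, k (Xt ω) * W ω ∂P := by
          simp [mul_comm]
      _ = (∫ ω, k (Xt ω) ∂P) * ∫ ω, W ω ∂P := this
      _ = (∫ ω, W ω ∂P) * ∫ ω, k (Xt ω) ∂P := mul_comm _ _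
  have hsame : ∫ ω, k (Xt ω) ∂P = ∫ ω, k (X ω) ∂P := by
    rw [← integral_map hXt.aemeasurable hkmeas.aestronglyMeasurable, hdist,
      integral_map hX.aemeasurable hkmeas.aestronglyMeasurable]
  -- rewrite covariance as a single integral
  have hrw : (∫ ω, W ω * k (X ω) ∂P) - (∫ ω, W ω ∂P) * ∫ ω, k (X ω) ∂P
      = ∫ ω, W ω * (k (X ω) - k (Xt ω)) ∂P := by
    rw [← hsame, ← hmul, ← integral_sub hWkX hWkXt]
    congr 1
    funext ω
    ring
  rw [hrw]
  -- pointwise bound and integrability of the bound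
  have hdiffmeas : Measurable (fun ω => ∑ i, |X ω i - Xt ω i|) :=
    Finset.measurable_sum _ fun i _ =>
      ((hX.eval.sub hXt.eval)).abs
  have hdiffint : Integrable (fun ω => ∑ i, |X ω i - Xt ω i|) P := by
    refine (hXint.add hXtint).mono' hdiffmeas.aestronglyMeasurable
      (Filter.Eventually.of_forall fun ω => ?_)
    have h1 : ∀ i, |X ω i - Xt ω i| ≤ |X ω i| + |Xt ω i| := fun i => abs_sub _ _
    calc ‖∑ i, |X ω i - Xt ω i|‖ = ∑ i, |X ω i - Xt ω i| := by
          rw [Real.norm_eq_abs, abs_of_nonneg (Finset.sum_nonneg fun i _ => abs_nonneg _)]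
      _ ≤ ∑ i, (|X ω i| + |Xt ω i|) := Finset.sum_le_sum fun i _ => h1 i
      _ = (∑ i, |X ω i|) + ∑ i, |Xt ω i| := Finset.sum_add_distrib
  have hbound : ∀ ω, |W ω * (k (X ω) - k (Xt ω))|
      ≤ CW * Lk * ∑ i, |X ω i - Xt ω i| := by
    intro ω
    rw [abs_mul, mul_assoc]
    exact mul_le_mul (hCW ω) (hkLip _ _) (abs_nonneg _) hCW0
  have hprodint : Integrable (fun ω => W ω * (k (X ω) - k (Xt ω))) P :=
    (hWkX.sub hWkXt).congr (Filter.Eventually.of_forall fun ω => by simp [Pi.sub_apply]; ring)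
  calc |∫ ω, W ω * (k (X ω) - k (Xt ω)) ∂P|
      ≤ ∫ ω, |W ω * (k (X ω) - k (Xt ω))| ∂P := by
        simpa only [Real.norm_eq_abs] using
          norm_integral_le_integral_norm (μ := P) (fun ω => W ω * (k (X ω) - k (Xt ω)))
    _ ≤ ∫ ω, CW * Lk * ∑ i, |X ω i - Xt ω i| ∂P :=
        integral_mono hprodint.abs (hdiffint.const_mul _) hbound
    _ = CW * Lk * ∫ ω, ∑ i, |X ω i - Xt ω i| ∂P := integral_const_mul _ _
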